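/- Let Ω = ℝ, f = 𝟙_{[0,∞)}, and g = (1/n)·𝟙_{[-n,0]}. Then the W₂-projection of g onto K_f = {ρ : ∫ρ = 1, ρ ≤ f} is ρ = 𝟙_{[0,1]}, and the total variations satisfy TV(ρ) = 2, TV(f) = 1, TV(g) = 2/n; in particular, TV(ρ) = TV(g) + 2·TV(f) − 2/n, showing the constant 2 in the estimate TV(P_{K_f} g) ≤ TV(g) + 2·TV(f) is sharp. -/

import Mathlib

open MeasureTheory Set
open scoped ENNReal

noncomputable section

/-- The set of transport plans between two measures. -/
def Couplings {E : Type*} [MeasurableSpace E] (μ ν : Measure E) : Set (Measure (E × E)) :=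
  {γ | γ.map Prod.fst = μ ∧ γ.map Prod.snd = ν}

/-- The squared 2-Wasserstein cost between two measures. -/
def W2sq {E : Type*} [MeasurableSpace E] [Dist E] (μ ν : Measure E) : ℝ≥0∞ :=
  ⨅ γ ∈ Couplings μ ν, ∫⁻ p : E × E, ENNReal.ofReal (dist p.1 p.2 ^ 2) ∂γ

/-- Membership in `K_f`: a probability density bounded above by `f`. -/
def MemKf (f ρ : ℝ → ℝ) : Prop :=
  (∀ᵐ x, 0 ≤ ρ x) ∧ (∀ᵐ x, ρ x ≤ f x) ∧ ∫⁻ x, ENNReal.ofReal (ρ x) = 1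


lemma evar_le_mono {f : ℝ → ℝ} {s : Set ℝ} (hf : MonotoneOn f s) {a b : ℝ}
    (h1 : ∀ x ∈ s, a ≤ f x) (h2 : ∀ x ∈ s, f x ≤ b) :
    eVariationOn f s ≤ ENNReal.ofReal (b - a) := by
  apply iSup_le
  rintro ⟨m, u, hu, us⟩
  have key : ∀ i : ℕ, edist (f (u (i + 1))) (f (u i))
      = ENNReal.ofReal (f (u (i + 1)) - f (u i)) := fun i => by
    rw [edist_dist, Real.dist_eq,
      abs_of_nonneg (sub_nonneg.2 (hf (us i) (us (i + 1)) (hu (Nat.le_succ i))))]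
  simp only [key]
  rw [← ENNReal.ofReal_sum_of_nonneg
      (fun i _ => sub_nonneg.2 (hf (us i) (us (i + 1)) (hu (Nat.le_succ i)))),
    Finset.sum_range_sub (fun i => f (u i))]
  exact ENNReal.ofReal_le_ofReal (by have := h1 _ (us 0); have := h2 _ (us m); linarith)

lemma evar_le_anti {f : ℝ → ℝ} {s : Set ℝ} (hf : AntitoneOn f s) {a b : ℝ}
    (h1 : ∀ x ∈ s, a ≤ f x) (h2 : ∀ x ∈ s, f x ≤ b) :
    eVariationOn f s ≤ ENNReal.ofReal (b - a) := by
  apply iSup_le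
  rintro ⟨m, u, hu, us⟩
  have key : ∀ i : ℕ, edist (f (u (i + 1))) (f (u i))
      = ENNReal.ofReal (f (u i) - f (u (i + 1))) := fun i => by
    rw [edist_dist, Real.dist_eq, abs_sub_comm,
      abs_of_nonneg (sub_nonneg.2 (hf (us i) (us (i + 1)) (hu (Nat.le_succ i))))]
  simp only [key]
  rw [← ENNReal.ofReal_sum_of_nonneg
      (fun i _ => sub_nonneg.2 (hf (us i) (us (i + 1)) (hu (Nat.le_succ i)))),
    Finset.sum_range_sub' (fun i => f (u i))]
  exact ENNReal.ofReal_le_ofReal (by have := h2 _ (us 0); have := h1 _ (us m); linarith)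

lemma evar_rho {ρ : ℝ → ℝ} (hρ : ρ = indicator (Icc (0:ℝ) 1) fun _ => (1:ℝ)) :
    eVariationOn ρ Set.univ = 2 := by
  have hval : ∀ x : ℝ, ρ x = if 0 ≤ x ∧ x ≤ 1 then 1 else 0 := by
    intro x; simp [hρ, indicator_apply, Set.mem_Icc]
  apply le_antisymm
  · have huniv : (Iic (1:ℝ)) ∪ (Ici 1) = univ := Iic_union_Ici
    rw [← huniv, eVariationOn.union ρ isGreatest_Iic isLeast_Ici]
    have h1 : eVariationOn ρ (Iic 1) ≤ ENNReal.ofReal (1 - 0) := by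
      apply evar_le_mono
      · intro x hx y hy hxy
        simp only [hval]
        split_ifs with p q q <;> simp only [mem_Iic] at hx hy <;>
          first | exact absurd ⟨by linarith [p.1, p.2], by linarith [p.1, p.2]⟩ q | norm_num
      · intro x _; simp only [hval]; split_ifs <;> norm_num
      · intro x _; simp only [hval]; split_ifs <;> norm_num
    have h2 : eVariationOn ρ (Ici 1) ≤ ENNReal.ofReal (1 - 0) := by
      apply evar_le_anti
      · intro x hx y hy hxy
        simp only [hval]
        split_ifs with p q q <;> simp only [mem_Ici] at hx hy <;>
          first | exact absurd ⟨by linarith [p.1, p.2], by linarith [p.1, p.2]⟩ q | norm_num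
      · intro x _; simp only [hval]; split_ifs <;> norm_num
      · intro x _; simp only [hval]; split_ifs <;> norm_num
    calc _ ≤ ENNReal.ofReal (1 - 0) + ENNReal.ofReal (1 - 0) := add_le_add h1 h2
      _ = 2 := by norm_num [← ENNReal.ofReal_add]
  · set u : ℕ → ℝ := fun i => if i = 0 then (-1:ℝ) else if i = 1 then 1/2 else 2 with hu
    have hmono : Monotone u := by
      apply monotone_nat_of_le_succ
      intro i
      match i with
      | 0 => norm_num [hu]
      | 1 => norm_num [hu]
      | (k+2) => have h2 : k + 2 ≠ 1 := by omega
                 norm_num [hu, h2]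
    have := eVariationOn.sum_le (f := ρ) (n := 2) hmono (fun i => mem_univ (u i))
    refine le_trans (le_of_eq ?_) this
    rw [Finset.sum_range_succ, Finset.sum_range_one]
    have e0 : ρ (u 0) = 0 := by norm_num [hu, hval]
    have e1 : ρ (u 1) = 1 := by norm_num [hu, hval]
    have e2 : ρ (u 2) = 0 := by norm_num [hu, hval]
    rw [e0, e1, e2]
    rw [edist_dist, edist_dist]
    norm_num [Real.dist_eq, ← ENNReal.ofReal_add]
lemma evar_f {f : ℝ → ℝ} (hf : f = indicator (Ici (0:ℝ)) fun _ => (1:ℝ)) :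
    eVariationOn f Set.univ = 1 := by
  have hval : ∀ x : ℝ, f x = if 0 ≤ x then 1 else 0 := by
    intro x; simp [hf, indicator_apply, Set.mem_Ici]
  apply le_antisymm
  · have h1 : eVariationOn f univ ≤ ENNReal.ofReal (1 - 0) := by
      apply evar_le_mono
      · intro x _ y _ hxy
        simp only [hval]
        split_ifs with p q <;> first | exact absurd (le_trans p hxy) q | norm_num
      · intro x _; simp only [hval]; split_ifs <;> norm_num
      · intro x _; simp only [hval]; split_ifs <;> norm_num
    simpa using h1
  · set u : ℕ → ℝ := fun i => if i = 0 then (-1:ℝ) else 1 with hu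
    have hmono : Monotone u := by
      apply monotone_nat_of_le_succ
      intro i; match i with
      | 0 => norm_num [hu]
      | (k+1) => norm_num [hu]
    have := eVariationOn.sum_le (f := f) (n := 1) hmono (fun i => mem_univ (u i))
    refine le_trans (le_of_eq ?_) this
    rw [Finset.sum_range_one]
    have e0 : f (u 0) = 0 := by norm_num [hu, hval]
    have e1 : f (u 1) = 1 := by norm_num [hu, hval]
    rw [e0, e1, edist_dist]
    norm_num [Real.dist_eq]

lemma evar_g {n : ℕ} (hn : 1 ≤ n) {g : ℝ → ℝ}
    (hg : g = indicator (Icc (-(n:ℝ)) 0) fun _ => (1/(n:ℝ))) :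
    eVariationOn g Set.univ = 2 / (n : ℝ≥0∞) := by
  have hN : (1:ℝ) ≤ (n:ℝ) := by exact_mod_cast hn
  have hval : ∀ x : ℝ, g x = if -(n:ℝ) ≤ x ∧ x ≤ 0 then 1/(n:ℝ) else 0 := by
    intro x; simp [hg, indicator_apply, Set.mem_Icc]
  have hofr : ENNReal.ofReal (1/(n:ℝ)) = ((n:ℝ≥0∞))⁻¹ := by
    rw [one_div, ENNReal.ofReal_inv_of_pos (by linarith), ENNReal.ofReal_natCast]
  apply le_antisymm
  · have huniv : (Iic (0:ℝ)) ∪ (Ici 0) = univ := Iic_union_Ici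
    rw [← huniv, eVariationOn.union g isGreatest_Iic isLeast_Ici]
    have h1 : eVariationOn g (Iic 0) ≤ ENNReal.ofReal (1/(n:ℝ) - 0) := by
      apply evar_le_mono
      · intro x hx y hy hxy
        simp only [hval]
        simp only [mem_Iic] at hx hy
        split_ifs with p q q <;>
          first | exact absurd ⟨by linarith [p.1, p.2], by linarith [p.1, p.2]⟩ q | norm_num
      · intro x _; simp only [hval]; split_ifs <;> first | exact le_rfl | positivity
      · intro x _; simp only [hval]; split_ifs <;> first | exact le_rfl | positivity
    have h2 : eVariationOn g (Ici 0) ≤ ENNReal.ofReal (1/(n:ℝ) - 0) := by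
      apply evar_le_anti
      · intro x hx y hy hxy
        simp only [hval]
        simp only [mem_Ici] at hx hy
        split_ifs with p q q <;>
          first | exact absurd ⟨by linarith [p.1, p.2], by linarith [p.1, p.2]⟩ q | norm_num
      · intro x _; simp only [hval]; split_ifs <;> first | exact le_rfl | positivity
      · intro x _; simp only [hval]; split_ifs <;> first | exact le_rfl | positivity
    calc _ ≤ ENNReal.ofReal (1/(n:ℝ) - 0) + ENNReal.ofReal (1/(n:ℝ) - 0) := add_le_add h1 h2
      _ = 2 / (n : ℝ≥0∞) := by
          rw [sub_zero, hofr, ENNReal.div_eq_inv_mul]; ring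
  · set u : ℕ → ℝ := fun i => if i = 0 then (-((n:ℝ)+1)) else if i = 1 then 0 else 1 with hu
    have hmono : Monotone u := by
      apply monotone_nat_of_le_succ
      intro i; match i with
      | 0 => norm_num [hu]; linarith
      | 1 => norm_num [hu]
      | (k+2) => have h2 : k + 2 ≠ 1 := by omega
                 norm_num [hu, h2]
    have := eVariationOn.sum_le (f := g) (n := 2) hmono (fun i => mem_univ (u i))
    refine le_trans (le_of_eq ?_) this
    rw [Finset.sum_range_succ, Finset.sum_range_one]
    have e0 : g (u 0) = 0 := by
      simp only [hu, hval]
      norm_num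
    have e1 : g (u 1) = 1/(n:ℝ) := by
      simp only [hu, hval]; norm_num
    have e2 : g (u 2) = 0 := by simp only [hu, hval]; norm_num
    rw [e0, e1, e2, edist_dist, edist_dist]
    rw [Real.dist_eq, Real.dist_eq, sub_zero, zero_sub, abs_neg,
      abs_of_nonneg (by positivity : (0:ℝ) ≤ 1/(n:ℝ))]
    rw [hofr, ENNReal.div_eq_inv_mul]
    ring

lemma lint_Icc_ofReal {a b : ℝ} (hab : a ≤ b) {h : ℝ → ℝ} (hc : Continuous h)
    (h0 : ∀ x ∈ Icc a b, 0 ≤ h x) :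
    ∫⁻ x in Icc a b, ENNReal.ofReal (h x) = ENNReal.ofReal (∫ x in a..b, h x) := by
  rw [← MeasureTheory.ofReal_integral_eq_lintegral_ofReal (hc.integrableOn_Icc)
    ((ae_restrict_iff' measurableSet_Icc).2 (ae_of_all _ h0))]
  congr 1
  rw [intervalIntegral.integral_of_le hab, integral_Icc_eq_integral_Ioc]

lemma int_quad (N : ℝ) : ∫ t in (0:ℝ)..1, ((1-N)*t + N)^2 = (N^2+N+1)/3 := by
  have hderiv : ∀ t ∈ Set.uIcc (0:ℝ) 1,
      HasDerivAt (fun t => (1-N)^2/3*t^3 + N*(1-N)*t^2 + N^2*t) (((1-N)*t + N)^2) t := by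
    intro t _
    have h := (((hasDerivAt_pow 3 t).const_mul ((1-N)^2/3)).add
      ((hasDerivAt_pow 2 t).const_mul (N*(1-N)))).add ((hasDerivAt_id t).const_mul (N^2))
    refine h.congr_deriv ?_
    ring
  rw [intervalIntegral.integral_eq_sub_of_hasDerivAt hderiv
    ((Continuous.intervalIntegrable (by continuity) _ _))]
  ring

lemma int_phi (N : ℝ) : ∫ t in (0:ℝ)..1, ((1-N)*t^2 + 2*N*t) = (2*N+1)/3 := by
  have hderiv : ∀ t ∈ Set.uIcc (0:ℝ) 1,
      HasDerivAt (fun t => (1-N)/3*t^3 + N*t^2) ((1-N)*t^2 + 2*N*t) t := by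
    intro t _
    have h := ((hasDerivAt_pow 3 t).const_mul ((1-N)/3)).add
      ((hasDerivAt_pow 2 t).const_mul N)
    refine h.congr_deriv ?_
    ring
  rw [intervalIntegral.integral_eq_sub_of_hasDerivAt hderiv
    ((Continuous.intervalIntegrable (by continuity) _ _))]
  ring

lemma int_psi (N : ℝ) : ∫ y in (-N)..(0:ℝ), ((1-1/N)*y^2 - 2*y) = (1-1/N)*N^3/3 + N^2 := by
  have hderiv : ∀ y ∈ Set.uIcc (-N) (0:ℝ),
      HasDerivAt (fun y => (1-1/N)/3*y^3 - y^2) ((1-1/N)*y^2 - 2*y) y := by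
    intro y _
    have h := ((hasDerivAt_pow 3 y).const_mul ((1-1/N)/3)).sub (hasDerivAt_pow 2 y)
    refine h.congr_deriv ?_
    ring
  rw [intervalIntegral.integral_eq_sub_of_hasDerivAt hderiv
    ((Continuous.intervalIntegrable (by continuity) _ _))]
  ring

lemma map_affine {n : ℕ} (hn : 1 ≤ n) :
    Measure.map (fun t : ℝ => (n:ℝ)*t - (n:ℝ)) volume
      = ENNReal.ofReal (1/(n:ℝ)) • volume := by
  have hN : (0:ℝ) < (n:ℝ) := by exact_mod_cast hn
  have hcomp : (fun t : ℝ => (n:ℝ)*t - (n:ℝ))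
      = (fun t : ℝ => t + (-(n:ℝ))) ∘ (fun t : ℝ => (n:ℝ)*t) := by
    funext t; simp [sub_eq_add_neg]
  rw [hcomp, ← Measure.map_map (by fun_prop) (by fun_prop),
    Real.map_volume_mul_left (ne_of_gt hN), Measure.map_smul,
    map_add_right_eq_self volume (-(n:ℝ))]
  congr 1
  rw [abs_of_nonneg (by positivity)]
  norm_num

lemma mu_eq {ρ : ℝ → ℝ} (hρ : ρ = indicator (Icc (0:ℝ) 1) fun _ => (1:ℝ)) :
    (volume.withDensity fun x => ENNReal.ofReal (ρ x)) = volume.restrict (Icc 0 1) := by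
  have hfun : (fun x => ENNReal.ofReal (ρ x))
      = (Icc (0:ℝ) 1).indicator (fun _ => (1:ℝ≥0∞)) := by
    funext x; by_cases h : x ∈ Icc (0:ℝ) 1 <;> simp [hρ, h]
  rw [hfun, withDensity_indicator measurableSet_Icc]
  exact withDensity_one

lemma nu_eq {n : ℕ} {g : ℝ → ℝ}
    (hg : g = indicator (Icc (-(n:ℝ)) 0) fun _ => (1/(n:ℝ))) :
    (volume.withDensity fun x => ENNReal.ofReal (g x))
      = ENNReal.ofReal (1/(n:ℝ)) • volume.restrict (Icc (-(n:ℝ)) 0) := by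
  have hfun : (fun x => ENNReal.ofReal (g x))
      = (Icc (-(n:ℝ)) 0).indicator (fun _ => ENNReal.ofReal (1/(n:ℝ))) := by
    funext x; by_cases h : x ∈ Icc (-(n:ℝ)) 0 <;> simp [hg, h]
  rw [hfun, withDensity_indicator measurableSet_Icc, withDensity_const]

lemma nu_as_map {n : ℕ} (hn : 1 ≤ n) {g : ℝ → ℝ}
    (hg : g = indicator (Icc (-(n:ℝ)) 0) fun _ => (1/(n:ℝ))) :
    (volume.withDensity fun x => ENNReal.ofReal (g x))
      = Measure.map (fun t : ℝ => (n:ℝ)*t - (n:ℝ)) (volume.restrict (Icc 0 1)) := by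
  have hN : (1:ℝ) ≤ (n:ℝ) := by exact_mod_cast hn
  have hpre : (fun t : ℝ => (n:ℝ)*t - (n:ℝ)) ⁻¹' (Icc (-(n:ℝ)) 0) = Icc (0:ℝ) 1 := by
    ext t
    simp only [mem_preimage, mem_Icc]
    constructor
    · rintro ⟨h1, h2⟩
      constructor <;> nlinarith
    · rintro ⟨h1, h2⟩
      constructor <;> nlinarith
  rw [nu_eq hg, ← Measure.restrict_smul, ← map_affine hn,
    Measure.restrict_map (by fun_prop) measurableSet_Icc, hpre]

lemma gamma0_fst {n : ℕ} :
    (Measure.map (fun t : ℝ => (t, (n:ℝ)*t - (n:ℝ))) (volume.restrict (Icc 0 1))).map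
        Prod.fst = volume.restrict (Icc 0 1) := by
  rw [Measure.map_map (by fun_prop) (by fun_prop)]
  have hid : (Prod.fst ∘ fun t : ℝ => (t, (n:ℝ)*t - (n:ℝ))) = id := rfl
  rw [hid, Measure.map_id]

lemma gamma0_snd {n : ℕ} (hn : 1 ≤ n) {g : ℝ → ℝ}
    (hg : g = indicator (Icc (-(n:ℝ)) 0) fun _ => (1/(n:ℝ))) :
    (Measure.map (fun t : ℝ => (t, (n:ℝ)*t - (n:ℝ))) (volume.restrict (Icc 0 1))).map
        Prod.snd = volume.withDensity fun x => ENNReal.ofReal (g x) := by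
  rw [Measure.map_map (by fun_prop) (by fun_prop), nu_as_map hn hg]
  rfl

lemma gamma0_cost {n : ℕ} (hn : 1 ≤ n) :
    ∫⁻ p : ℝ × ℝ, ENNReal.ofReal (dist p.1 p.2 ^ 2)
        ∂(Measure.map (fun t : ℝ => (t, (n:ℝ)*t - (n:ℝ))) (volume.restrict (Icc 0 1)))
      = ENNReal.ofReal (((n:ℝ)^2+(n:ℝ)+1)/3) := by
  rw [lintegral_map (by fun_prop) (by fun_prop)]
  have : ∀ t : ℝ, dist t ((n:ℝ)*t - (n:ℝ)) ^ 2 = ((1-(n:ℝ))*t + (n:ℝ))^2 := by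
    intro t; rw [Real.dist_eq, sq_abs]; ring
  simp only [this]
  rw [lint_Icc_ofReal zero_le_one (by continuity) (fun x _ => sq_nonneg _), int_quad]

lemma bathtub {h : ℝ → ℝ≥0∞} (hmeas : Measurable h) (hneg : ∀ᵐ x, x < 0 → h x = 0)
    (hle1 : ∀ᵐ x, h x ≤ 1) (htot : ∫⁻ x, h x = 1) {Φ : ℝ → ℝ≥0∞} (hΦm : Measurable Φ)
    {c : ℝ≥0∞} (hΦ1 : ∀ x ∈ Icc (0:ℝ) 1, Φ x ≤ c) (hΦ2 : ∀ x ∈ Ioi (1:ℝ), c ≤ Φ x) :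
    ∫⁻ x in Icc (0:ℝ) 1, Φ x ≤ ∫⁻ x, Φ x * h x := by
  have hset : (Iio (0:ℝ)) ∪ (Icc 0 1 ∪ Ioi 1) = univ := by
    ext x
    simp only [mem_union, mem_Iio, mem_Icc, mem_Ioi, mem_univ, iff_true]
    rcases lt_or_ge x 0 with h | h
    · exact Or.inl h
    rcases le_or_gt x 1 with h' | h'
    · exact Or.inr (Or.inl ⟨h, h'⟩)
    · exact Or.inr (Or.inr h')
  have hdisj1 : Disjoint (Iio (0:ℝ)) (Icc 0 1 ∪ Ioi 1) := by
    rw [Set.disjoint_left]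
    rintro x hx (⟨h1, _⟩ | h1) <;> simp only [mem_Iio] at hx <;> simp at * <;> linarith
  have hdisj2 : Disjoint (Icc (0:ℝ) 1) (Ioi 1) := by
    rw [Set.disjoint_left]
    rintro x ⟨_, h2⟩ hx
    simp only [mem_Ioi] at hx; linarith
  have hsplit : ∀ (F : ℝ → ℝ≥0∞),
      ∫⁻ x, F x = (∫⁻ x in Iio 0, F x) + ((∫⁻ x in Icc 0 1, F x) + ∫⁻ x in Ioi 1, F x) := by
    intro F
    rw [← setLIntegral_univ, ← hset,
      lintegral_union (measurableSet_Icc.union measurableSet_Ioi) hdisj1,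
      lintegral_union measurableSet_Ioi hdisj2]
  -- h vanishes on Iio 0
  have hIio : ∀ (F : ℝ → ℝ≥0∞), ∫⁻ x in Iio 0, F x * h x = 0 := by
    intro F
    have : ∀ᵐ x ∂(volume.restrict (Iio (0:ℝ))), F x * h x = 0 := by
      refine (ae_restrict_iff' measurableSet_Iio).2 ?_
      filter_upwards [hneg] with x hx hx0
      rw [hx hx0, mul_zero]
    rw [lintegral_congr_ae this, lintegral_zero]
  set s := ∫⁻ x in Icc (0:ℝ) 1, h x with hs
  have hs_le : s ≤ 1 := by
    rw [← htot, hsplit h]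
    calc s ≤ (∫⁻ x in Icc (0:ℝ) 1, h x) + ∫⁻ x in Ioi 1, h x := le_self_add
      _ ≤ _ := le_add_self
  have hs_ne : s ≠ ∞ := (lt_of_le_of_lt hs_le ENNReal.one_lt_top).ne
  have htail : ∫⁻ x in Ioi (1:ℝ), h x = 1 - s := by
    have h0 : ∫⁻ x in Iio (0:ℝ), h x = 0 := by
      have : ∀ᵐ x ∂(volume.restrict (Iio (0:ℝ))), h x = 0 :=
        (ae_restrict_iff' measurableSet_Iio).2 (hneg.mono fun x hx hx0 => hx hx0)
      rw [lintegral_congr_ae this, lintegral_zero]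
    have h1 := hsplit h
    rw [htot, h0, zero_add] at h1
    exact (ENNReal.sub_eq_of_eq_add hs_ne (by rw [h1, add_comm])).symm
  -- on [0,1] : Φ = Φ*h + Φ*(1-h) a.e.
  have hIcc_split : ∫⁻ x in Icc (0:ℝ) 1, Φ x
      = (∫⁻ x in Icc (0:ℝ) 1, Φ x * h x) + ∫⁻ x in Icc (0:ℝ) 1, Φ x * (1 - h x) := by
    rw [← lintegral_add_left (f := fun x => Φ x * h x) (hΦm.mul hmeas)]
    apply lintegral_congr_ae
    refine (ae_restrict_of_ae ?_)
    filter_upwards [hle1] with x hx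
    rw [← mul_add, add_tsub_cancel_of_le hx, mul_one]
  have hint1mh : ∫⁻ x in Icc (0:ℝ) 1, (1 - h x) = 1 - s := by
    have hadd : (∫⁻ x in Icc (0:ℝ) 1, (1 - h x)) + s = 1 := by
      rw [← lintegral_add_right _ hmeas]
      have : ∀ᵐ x ∂(volume.restrict (Icc (0:ℝ) 1)), (1 - h x) + h x = 1 := by
        refine ae_restrict_of_ae ?_
        filter_upwards [hle1] with x hx
        rw [tsub_add_cancel_of_le hx]
      rw [lintegral_congr_ae this, setLIntegral_const, one_mul, Real.volume_Icc]
      norm_num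
    exact (ENNReal.sub_eq_of_eq_add hs_ne hadd.symm).symm
  have hB : ∫⁻ x in Icc (0:ℝ) 1, Φ x * (1 - h x) ≤ c * (1 - s) := by
    calc ∫⁻ x in Icc (0:ℝ) 1, Φ x * (1 - h x)
        ≤ ∫⁻ x in Icc (0:ℝ) 1, c * (1 - h x) := by
          apply setLIntegral_mono_ae' measurableSet_Icc
          refine ae_of_all _ fun x hx => mul_le_mul_left (hΦ1 x hx) _
      _ = c * ∫⁻ x in Icc (0:ℝ) 1, (1 - h x) := lintegral_const_mul c (by fun_prop)
      _ = c * (1 - s) := by rw [hint1mh]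
  have hC : c * (1 - s) ≤ ∫⁻ x in Ioi (1:ℝ), Φ x * h x := by
    calc c * (1 - s) = c * ∫⁻ x in Ioi (1:ℝ), h x := by rw [htail]
      _ = ∫⁻ x in Ioi (1:ℝ), c * h x := (lintegral_const_mul c hmeas).symm
      _ ≤ ∫⁻ x in Ioi (1:ℝ), Φ x * h x := by
          apply setLIntegral_mono_ae' measurableSet_Ioi
          refine ae_of_all _ fun x hx => mul_le_mul_left (hΦ2 x hx) _
  calc ∫⁻ x in Icc (0:ℝ) 1, Φ x
      = (∫⁻ x in Icc (0:ℝ) 1, Φ x * h x) + ∫⁻ x in Icc (0:ℝ) 1, Φ x * (1 - h x) := hIcc_split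
    _ ≤ (∫⁻ x in Icc (0:ℝ) 1, Φ x * h x) + c * (1 - s) := add_le_add_right hB _
    _ ≤ (∫⁻ x in Icc (0:ℝ) 1, Φ x * h x) + ∫⁻ x in Ioi 1, Φ x * h x := add_le_add_right hC _
    _ ≤ _ := by rw [hsplit (fun x => Φ x * h x), hIio]; exact le_add_self

def phi (N : ℝ) : ℝ → ℝ := fun x => if x ≤ 1 then (1-N)*x^2 + 2*N*x else x^2 + N

def psi (N : ℝ) : ℝ → ℝ := fun y => (1-1/N)*y^2 - 2*y

lemma phi_meas (N : ℝ) : Measurable (phi N) :=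
  Measurable.ite (measurableSet_le measurable_id measurable_const) (by fun_prop) (by fun_prop)

lemma phi_nonneg {N x : ℝ} (hN : 1 ≤ N) (hx : 0 ≤ x) : 0 ≤ phi N x := by
  unfold phi
  split_ifs with h
  · nlinarith [mul_nonneg (by linarith : (0:ℝ) ≤ N - 1) (by linarith : (0:ℝ) ≤ 1 - x),
      mul_nonneg hx hx]
  · nlinarith

lemma phi_le {N : ℝ} (hN : 1 ≤ N) {x : ℝ} (hx : x ∈ Icc (0:ℝ) 1) : phi N x ≤ 1 + N := by
  unfold phi
  rw [if_pos hx.2]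
  nlinarith [sq_nonneg (1-x), hx.1, hx.2]

lemma phi_ge {N : ℝ} (hN : 1 ≤ N) {x : ℝ} (hx : x ∈ Ioi (1:ℝ)) : 1 + N ≤ phi N x := by
  unfold phi
  simp only [mem_Ioi] at hx
  rw [if_neg (not_le.2 hx)]
  nlinarith

lemma psi_nonneg {N y : ℝ} (hN : 1 ≤ N) (hy : y ≤ 0) : 0 ≤ psi N y := by
  unfold psi
  have h1 : 0 ≤ 1 - 1/N := by
    have : 1/N ≤ 1 := by rw [div_le_one (by linarith)]; linarith
    linarith
  nlinarith [sq_nonneg y]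

lemma key_ineq {N x y : ℝ} (hN : 1 ≤ N) (hx : 0 ≤ x) (hy1 : -N ≤ y) (hy2 : y ≤ 0) :
    phi N x + psi N y ≤ (x - y)^2 + N := by
  have hN0 : (0:ℝ) < N := by linarith
  unfold phi psi
  split_ifs with h
  · have hid : ((x-y)^2 + N) - (((1-N)*x^2 + 2*N*x) + ((1-1/N)*y^2 - 2*y))
        = (N*x - y - N)^2 / N := by
      field_simp
      ring
    nlinarith [div_nonneg (sq_nonneg (N*x - y - N)) hN0.le]
  · push_neg at h
    have h1 : 0 ≤ (1/N) * y^2 := by positivity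
    have h2 : 0 ≤ (-y) * (x - 1) := mul_nonneg (by linarith) (by linarith)
    nlinarith [h1, h2]

lemma W2_lower {n : ℕ} (hn : 1 ≤ n) {f g ρ' : ℝ → ℝ}
    (hf : f = Set.indicator (Set.Ici (0 : ℝ)) (fun _ => (1 : ℝ)))
    (hg : g = Set.indicator (Set.Icc (-(n : ℝ)) 0) (fun _ => (1 / (n : ℝ))))
    (hm : Measurable ρ')
    (h0 : ∀ᵐ x, 0 ≤ ρ' x) (hub : ∀ᵐ x, ρ' x ≤ f x)
    (htot : ∫⁻ x, ENNReal.ofReal (ρ' x) = 1)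
    (γ : Measure (ℝ × ℝ))
    (hγ1 : γ.map Prod.fst = volume.withDensity fun x => ENNReal.ofReal (ρ' x))
    (hγ2 : γ.map Prod.snd = volume.withDensity fun x => ENNReal.ofReal (g x)) :
    ENNReal.ofReal (((n:ℝ)^2+(n:ℝ)+1)/3)
      ≤ ∫⁻ p : ℝ × ℝ, ENNReal.ofReal (dist p.1 p.2 ^ 2) ∂γ := by
  set N : ℝ := (n:ℝ) with hNdef
  have hN : (1:ℝ) ≤ N := by rw [hNdef]; exact_mod_cast hn
  have hN0 : (0:ℝ) < N := by linarith
  set h : ℝ → ℝ≥0∞ := fun x => ENNReal.ofReal (ρ' x) with hh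
  have hhm : Measurable h := by fun_prop
  -- density vanishes on negatives a.e.
  have hneg : ∀ᵐ x : ℝ, x < 0 → h x = 0 := by
    filter_upwards [h0, hub] with x h1 h2 hx
    have hfx : f x = 0 := by
      rw [hf, indicator_apply_eq_zero]
      intro hmem
      simp only [mem_Ici] at hmem; linarith
    simp only [hh, ENNReal.ofReal_eq_zero]
    rw [hfx] at h2; linarith
  have hle1 : ∀ᵐ x : ℝ, h x ≤ 1 := by
    filter_upwards [hub] with x h2
    have hfx : f x ≤ 1 := by
      rw [hf]; by_cases hmem : x ∈ Ici (0:ℝ) <;> simp [hmem]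
    simp only [hh, ← ENNReal.ofReal_one]
    exact ENNReal.ofReal_le_ofReal (le_trans h2 hfx)
  -- a.e. properties of γ
  have hμ'Iio : (volume.withDensity h) (Iio 0) = 0 := by
    rw [withDensity_apply _ measurableSet_Iio]
    have : ∀ᵐ x ∂(volume.restrict (Iio (0:ℝ))), h x = 0 :=
      (ae_restrict_iff' measurableSet_Iio).2 (hneg.mono fun x hx hx0 => hx hx0)
    rw [lintegral_congr_ae this, lintegral_zero]
  have hae1 : ∀ᵐ p : ℝ × ℝ ∂γ, 0 ≤ p.1 := by
    rw [ae_iff]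
    have hset : {p : ℝ × ℝ | ¬0 ≤ p.1} = Prod.fst ⁻¹' (Iio (0:ℝ)) := by
      ext p; simp [not_le]
    rw [hset, ← Measure.map_apply measurable_fst measurableSet_Iio, hγ1]
    exact hμ'Iio
  have hae2 : ∀ᵐ p : ℝ × ℝ ∂γ, -N ≤ p.2 ∧ p.2 ≤ 0 := by
    rw [ae_iff]
    have hset : {p : ℝ × ℝ | ¬(-N ≤ p.2 ∧ p.2 ≤ 0)} = Prod.snd ⁻¹' (Icc (-N) 0)ᶜ := by
      ext p; simp [mem_Icc]
    rw [hset, ← Measure.map_apply measurable_snd measurableSet_Icc.compl, hγ2, nu_eq hg,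
      Measure.smul_apply, Measure.restrict_apply measurableSet_Icc.compl]
    simp [← hNdef]
  -- total mass of γ is 1
  have hγuniv : γ Set.univ = 1 := by
    have := Measure.map_apply (μ := γ) measurable_fst MeasurableSet.univ
    rw [hγ1] at this
    rw [← Set.preimage_univ (f := @Prod.fst ℝ ℝ), ← this,
      withDensity_apply _ MeasurableSet.univ, setLIntegral_univ, htot]
  set Φ : ℝ → ℝ≥0∞ := fun x => ENNReal.ofReal (phi N x) with hΦ
  set Ψ : ℝ → ℝ≥0∞ := fun y => ENNReal.ofReal (psi N y) with hΨ
  have hΦm : Measurable Φ := (phi_meas N).ennreal_ofReal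
  have hΨm : Measurable Ψ := by rw [hΨ]; unfold psi; fun_prop
  -- pointwise inequality a.e.
  have haekey : ∀ᵐ p : ℝ × ℝ ∂γ,
      Φ p.1 + Ψ p.2 ≤ ENNReal.ofReal (dist p.1 p.2 ^ 2) + ENNReal.ofReal N := by
    filter_upwards [hae1, hae2] with p hp1 hp2
    have hkey := key_ineq hN hp1 hp2.1 hp2.2
    have hd : dist p.1 p.2 ^ 2 = (p.1 - p.2)^2 := by rw [Real.dist_eq, sq_abs]
    rw [hΦ, hΨ, ← ENNReal.ofReal_add (phi_nonneg hN hp1) (psi_nonneg hN hp2.2), hd,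
      ← ENNReal.ofReal_add (sq_nonneg _) (by linarith)]
    exact ENNReal.ofReal_le_ofReal hkey
  have hmain : (∫⁻ x, Φ x ∂(volume.withDensity h))
        + (∫⁻ y, Ψ y ∂(volume.withDensity fun x => ENNReal.ofReal (g x)))
      ≤ (∫⁻ p : ℝ × ℝ, ENNReal.ofReal (dist p.1 p.2 ^ 2) ∂γ) + ENNReal.ofReal N := by
    rw [← hγ1, ← hγ2, lintegral_map hΦm measurable_fst, lintegral_map hΨm measurable_snd,
      ← lintegral_add_left (show Measurable fun p : ℝ × ℝ => Φ p.1 from hΦm.comp measurable_fst)]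
    calc ∫⁻ p : ℝ × ℝ, (Φ p.1 + Ψ p.2) ∂γ
        ≤ ∫⁻ p : ℝ × ℝ, (ENNReal.ofReal (dist p.1 p.2 ^ 2) + ENNReal.ofReal N) ∂γ :=
          lintegral_mono_ae haekey
      _ = _ := by
          rw [lintegral_add_right _ measurable_const, lintegral_const, hγuniv, mul_one]
  -- compute the two integrals from below
  have hΦint : ENNReal.ofReal ((2*N+1)/3) ≤ ∫⁻ x, Φ x ∂(volume.withDensity h) := by
    rw [lintegral_withDensity_eq_lintegral_mul _ hhm hΦm]
    have hIcc : ∫⁻ x in Icc (0:ℝ) 1, Φ x = ENNReal.ofReal ((2*N+1)/3) := by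
      have hcong : ∫⁻ x in Icc (0:ℝ) 1, Φ x
          = ∫⁻ x in Icc (0:ℝ) 1, ENNReal.ofReal ((1-N)*x^2 + 2*N*x) := by
        apply setLIntegral_congr_fun_ae measurableSet_Icc
        refine ae_of_all _ fun x hx => ?_
        simp only [hΦ, phi]
        rw [if_pos hx.2]
      rw [hcong, lint_Icc_ofReal (h := fun x => (1-N)*x^2 + 2*N*x) zero_le_one (by fun_prop)
        (fun x hx => by
          have := phi_nonneg hN hx.1 (N := N)
          simp only [phi] at this
          rwa [if_pos hx.2] at this), int_phi]
    rw [← hIcc]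
    have := bathtub hhm hneg hle1 htot hΦm (c := ENNReal.ofReal (1+N))
      (fun x hx => ENNReal.ofReal_le_ofReal (phi_le hN hx))
      (fun x hx => ENNReal.ofReal_le_ofReal (phi_ge hN hx))
    calc ∫⁻ x in Icc (0:ℝ) 1, Φ x ≤ ∫⁻ x, Φ x * h x := this
      _ = ∫⁻ x, (h * Φ) x := by
          apply lintegral_congr fun x => ?_
          simp [mul_comm]
  have hΨint : (∫⁻ y, Ψ y ∂(volume.withDensity fun x => ENNReal.ofReal (g x)))
      = ENNReal.ofReal (1/N) * ENNReal.ofReal ((1-1/N)*N^3/3 + N^2) := by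
    rw [nu_eq hg, lintegral_smul_measure]
    congr 1
    have hΨy : ∀ y ∈ Icc (-N) 0, Ψ y = ENNReal.ofReal ((1-1/N)*y^2 - 2*y) := by
      intro y _; simp only [hΨ, psi]
    rw [setLIntegral_congr_fun_ae measurableSet_Icc (ae_of_all _ hΨy),
      lint_Icc_ofReal (h := fun y => (1-1/N)*y^2 - 2*y) (by linarith : -N ≤ (0:ℝ))
        (by fun_prop)
        (fun y hy => by
          have := psi_nonneg hN hy.2 (N := N)
          simpa only [psi] using this), int_psi]
  -- combine
  have hsum : ENNReal.ofReal (((n:ℝ)^2+(n:ℝ)+1)/3) + ENNReal.ofReal N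
      ≤ (∫⁻ p : ℝ × ℝ, ENNReal.ofReal (dist p.1 p.2 ^ 2) ∂γ) + ENNReal.ofReal N := by
    refine le_trans ?_ hmain
    have hfrac : (0:ℝ) ≤ 1 - 1/N := by
      rw [sub_nonneg, div_le_one hN0]; exact hN
    have haux : (0:ℝ) ≤ 1/N * ((1-1/N)*N^3/3 + N^2) :=
      mul_nonneg (by positivity)
        (add_nonneg (div_nonneg (mul_nonneg hfrac (by positivity)) (by norm_num))
          (by positivity))
    rw [hΨint, ← ENNReal.ofReal_mul (by positivity), ← hNdef]
    have heq : ENNReal.ofReal ((N^2+N+1)/3) + ENNReal.ofReal N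
        = ENNReal.ofReal ((2*N+1)/3) + ENNReal.ofReal (1/N * ((1-1/N)*N^3/3 + N^2)) := by
      rw [← ENNReal.ofReal_add (by positivity) (by linarith),
        ← ENNReal.ofReal_add (by positivity) haux]
      congr 1
      field_simp
      ring
    rw [heq]
    exact add_le_add_left hΦint _
  exact (ENNReal.add_le_add_iff_right (show ENNReal.ofReal N ≠ ⊤ from ENNReal.ofReal_ne_top)).1 hsum

/-- Sharpness of the constant `2` in `TV(P_{K_f} g) ≤ TV(g) + 2·TV(f)`: on `ℝ`, with
`f = 𝟙_{[0,∞)}` and `g = (1/n)𝟙_{[-n,0]}`, the projection of `g` onto `K_f` is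
`ρ = 𝟙_{[0,1]}`, with `TV(ρ) = 2`, `TV(f) = 1`, `TV(g) = 2/n`, so that
`TV(ρ) = TV(g) + 2·TV(f) - 2/n`. -/
theorem stmt_17 (n : ℕ) (hn : 1 ≤ n)
    (f g ρ : ℝ → ℝ)
    (hf : f = Set.indicator (Set.Ici (0 : ℝ)) (fun _ => (1 : ℝ)))
    (hg : g = Set.indicator (Set.Icc (-(n : ℝ)) 0) (fun _ => (1 / (n : ℝ))))
    (hρ : ρ = Set.indicator (Set.Icc (0 : ℝ) 1) (fun _ => (1 : ℝ))) :
    MemKf f ρ ∧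
    (∀ ρ' : ℝ → ℝ, Measurable ρ' → MemKf f ρ' →
      W2sq (volume.withDensity fun x => ENNReal.ofReal (ρ x))
          (volume.withDensity fun x => ENNReal.ofReal (g x)) ≤
        W2sq (volume.withDensity fun x => ENNReal.ofReal (ρ' x))
          (volume.withDensity fun x => ENNReal.ofReal (g x))) ∧
    eVariationOn ρ Set.univ = 2 ∧
    eVariationOn f Set.univ = 1 ∧
    eVariationOn g Set.univ = 2 / (n : ℝ≥0∞) ∧
    eVariationOn ρ Set.univ =
      eVariationOn g Set.univ + 2 * eVariationOn f Set.univ - 2 / (n : ℝ≥0∞) := by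
  have hmemKf : MemKf f ρ := by
    refine ⟨ae_of_all _ fun x => ?_, ae_of_all _ fun x => ?_, ?_⟩
    · rw [hρ]; exact Set.indicator_nonneg (fun _ _ => zero_le_one) x
    · rw [hρ, hf]
      by_cases h : x ∈ Set.Icc (0:ℝ) 1
      · rw [Set.indicator_of_mem h]
        have : x ∈ Set.Ici (0:ℝ) := h.1
        rw [Set.indicator_of_mem this]
      · rw [Set.indicator_of_notMem h]
        exact Set.indicator_nonneg (fun _ _ => zero_le_one) x
    · have h1 : (volume.withDensity fun x => ENNReal.ofReal (ρ x)) Set.univ = 1 := by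
        rw [mu_eq hρ, Measure.restrict_apply MeasurableSet.univ, Set.univ_inter,
          Real.volume_Icc]
        norm_num
      rwa [withDensity_apply _ MeasurableSet.univ, setLIntegral_univ] at h1
  have hproj : ∀ ρ' : ℝ → ℝ, Measurable ρ' → MemKf f ρ' →
      W2sq (volume.withDensity fun x => ENNReal.ofReal (ρ x))
          (volume.withDensity fun x => ENNReal.ofReal (g x)) ≤
        W2sq (volume.withDensity fun x => ENNReal.ofReal (ρ' x))
          (volume.withDensity fun x => ENNReal.ofReal (g x)) := by
    intro ρ' hmeas hk
    obtain ⟨h0, hub, htot⟩ := hk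
    set γ₀ : Measure (ℝ × ℝ) :=
      Measure.map (fun t : ℝ => (t, (n:ℝ)*t - (n:ℝ))) (volume.restrict (Set.Icc 0 1)) with hγ₀
    have hmem : γ₀ ∈ Couplings (volume.withDensity fun x => ENNReal.ofReal (ρ x))
        (volume.withDensity fun x => ENNReal.ofReal (g x)) := by
      constructor
      · rw [mu_eq hρ]; exact gamma0_fst
      · exact gamma0_snd hn hg
    calc W2sq (volume.withDensity fun x => ENNReal.ofReal (ρ x))
          (volume.withDensity fun x => ENNReal.ofReal (g x))
        ≤ ∫⁻ p : ℝ × ℝ, ENNReal.ofReal (dist p.1 p.2 ^ 2) ∂γ₀ := by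
          unfold W2sq
          exact iInf₂_le γ₀ hmem
      _ = ENNReal.ofReal (((n:ℝ)^2+(n:ℝ)+1)/3) := gamma0_cost hn
      _ ≤ W2sq (volume.withDensity fun x => ENNReal.ofReal (ρ' x))
          (volume.withDensity fun x => ENNReal.ofReal (g x)) := by
          unfold W2sq
          exact le_iInf₂ fun γ hγ => W2_lower hn hf hg hmeas h0 hub htot γ hγ.1 hγ.2
  have hn0 : ((n:ℝ≥0∞)) ≠ 0 := Nat.cast_ne_zero.2 (by omega)
  have h2n : (2:ℝ≥0∞) / (n:ℝ≥0∞) ≠ ⊤ := by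
    simp [ENNReal.div_eq_top, hn0]
  refine ⟨hmemKf, hproj, evar_rho hρ, evar_f hf, evar_g hn hg, ?_⟩
  rw [evar_rho hρ, evar_f hf, evar_g hn hg, mul_one, ENNReal.add_sub_cancel_left h2n]

end
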